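/- Let X₁, ..., X_m be finite subsets of ℝⁿ that are pairwise mutually convexly separable, i.e., CH(X_i) ∩ X_j = ∅ for all i ≠ j. Then for each k there exists a single-hidden-layer rectifier classifier f_k(x) = ⟨a_k, max(0, Wᵀx + b)⟩ + c_k with a_k having all entries ≤ 0, such that f_k(x) > 0 for all x ∈ X_k and f_k(x) < 0 for all x in the union of the other sets. -/

import Mathlib

/-- Separation of a point from the convex hull of a finite set by an affine functional. -/
lemma scrn_sep_aux (n : ℕ) (s : Set (Fin n → ℝ)) (hs : s.Finite) (y : Fin n → ℝ)
    (hy : y ∉ convexHull ℝ s) :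
    ∃ (w : Fin n → ℝ) (β : ℝ),
      (∀ x ∈ s, (∑ j, w j * x j) + β ≤ 0) ∧ 0 < (∑ j, w j * y j) + β := by
  have hconv : Convex ℝ (convexHull ℝ s) := convex_convexHull ℝ s
  have hclosed : IsClosed (convexHull ℝ s) := (hs.isCompact_convexHull (𝕜 := ℝ)).isClosed
  obtain ⟨f, u, h1, h2⟩ := geometric_hahn_banach_closed_point hconv hclosed hy
  have key : ∀ z : Fin n → ℝ, (∑ j, f (Pi.single j 1) * z j) = f z := by
    intro z
    have hz : z = ∑ j, z j • (Pi.single j 1 : Fin n → ℝ) := by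
      ext i
      simp [Pi.single_apply, Finset.sum_ite_eq', eq_comm]
    conv_rhs => rw [hz]
    rw [map_sum]
    refine Finset.sum_congr rfl fun j _ => ?_
    rw [map_smul]
    simp [mul_comm]
  refine ⟨fun j => f (Pi.single j 1), -u, ?_, ?_⟩
  · intro x hx
    have := h1 x (subset_convexHull ℝ s hx)
    rw [key]; linarith
  · rw [key]; linarith

theorem multiclass_scrn_separator_exists (n m : ℕ) (X : Fin m → Set (Fin n → ℝ))
    (hfin : ∀ k, (X k).Finite)
    (hsep : ∀ i j, i ≠ j → Disjoint (convexHull ℝ (X i)) (X j)) :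
    ∃ (l : ℕ) (W : Fin l → Fin n → ℝ) (b : Fin l → ℝ) (a : Fin m → Fin l → ℝ)
      (c : Fin m → ℝ),
      (∀ k i, a k i ≤ 0) ∧ (∀ k, 0 ≤ c k) ∧
      (∀ k, ∀ x ∈ X k,
        0 < (∑ i, a k i * max 0 ((∑ j, W i j * x j) + b i)) + c k) ∧
      (∀ k k', k' ≠ k → ∀ x ∈ X k',
        (∑ i, a k i * max 0 ((∑ j, W i j * x j) + b i)) + c k < 0) := by
  classical
  -- the set of "foreign" points for class k
  set S : Fin m → Set (Fin n → ℝ) := fun k => ⋃ j ∈ ({k}ᶜ : Set (Fin m)), X j with hS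
  have hSfin : ∀ k, (S k).Finite := fun k =>
    Set.Finite.biUnion (Set.toFinite _) fun j _ => hfin j
  have hyS : ∀ k, ∀ y ∈ S k, y ∉ convexHull ℝ (X k) := by
    intro k y hy
    rw [hS, Set.mem_iUnion₂] at hy
    obtain ⟨j, hj, hyj⟩ := hy
    exact fun hmem => Set.disjoint_left.1 (hsep k j (Ne.symm hj)) hmem hyj
  -- index type for hidden units
  let F : Fin m → Finset (Fin n → ℝ) := fun k => (hSfin k).toFinset
  let I := Σ k : Fin m, {y // y ∈ F k}
  have hmemS : ∀ (p : I), (p.2 : Fin n → ℝ) ∈ S p.1 := fun p =>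
    (hSfin p.1).mem_toFinset.1 p.2.2
  have hsepall : ∀ p : I,
      ∃ (w : Fin n → ℝ) (β : ℝ),
        (∀ x ∈ X p.1, (∑ j, w j * x j) + β ≤ 0) ∧
        0 < (∑ j, w j * (p.2 : Fin n → ℝ) j) + β :=
    fun p => scrn_sep_aux n (X p.1) (hfin p.1) p.2 (hyS p.1 p.2 (hmemS p))
  choose w β hw hv using hsepall
  set v : I → ℝ := fun p => (∑ j, w p j * (p.2 : Fin n → ℝ) j) + β p with hvdef
  let e : Fin (Fintype.card I) ≃ I := (Fintype.equivFin I).symm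
  refine ⟨Fintype.card I, fun i => w (e i), fun i => β (e i),
    fun k i => if (e i).1 = k then -(2 / v (e i)) else 0, fun _ => 1, ?_, ?_, ?_, ?_⟩
  · intro k i
    by_cases h : (e i).1 = k
    · have h2 : 0 ≤ 2 / v (e i) := div_nonneg (by norm_num) (hv (e i)).le
      show (if (e i).1 = k then -(2 / v (e i)) else 0) ≤ 0
      rw [if_pos h]
      linarith
    · simp [h]
  · intro k; norm_num
  · intro k x hx
    have hsum : (∑ i, (if (e i).1 = k then -(2 / v (e i)) else 0) *
        max 0 ((∑ j, w (e i) j * x j) + β (e i))) = 0 := by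
      refine Finset.sum_eq_zero fun i _ => ?_
      by_cases h : (e i).1 = k
      · have hx' : x ∈ X (e i).1 := h ▸ hx
        have := hw (e i) x hx'
        have hmax : max 0 ((∑ j, w (e i) j * x j) + β (e i)) = 0 := max_eq_left this
        rw [hmax, mul_zero]
      · simp [h]
    rw [hsum]; norm_num
  · intro k k' hkk' x hx
    have hxS : x ∈ S k := by
      rw [hS]
      exact Set.mem_biUnion (by simpa using hkk') hx
    set p₀ : I := ⟨k, ⟨x, (hSfin k).mem_toFinset.2 hxS⟩⟩ with hp₀
    set i₀ : Fin (Fintype.card I) := e.symm p₀ with hi₀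
    have hei₀ : e i₀ = p₀ := e.apply_symm_apply p₀
    have hterm : ∀ i, (if (e i).1 = k then -(2 / v (e i)) else 0) *
        max 0 ((∑ j, w (e i) j * x j) + β (e i)) ≤ if i = i₀ then -2 else 0 := by
      intro i
      by_cases hii : i = i₀
      · subst hii
        have hvpos : 0 < v p₀ := hv p₀
        have hval : (∑ j, w p₀ j * x j) + β p₀ = v p₀ := rfl
        rw [if_pos rfl, hei₀, if_pos rfl, hval, max_eq_right hvpos.le,
          show -(2 / v p₀) * v p₀ = -2 by field_simp]
      · rw [if_neg hii]
        by_cases h : (e i).1 = k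
        · rw [if_pos h]
          have h2 : 0 ≤ 2 / v (e i) := div_nonneg (by norm_num) (hv (e i)).le
          have := le_max_left (0:ℝ) ((∑ j, w (e i) j * x j) + β (e i))
          nlinarith
        · simp [h]
    calc (∑ i, (if (e i).1 = k then -(2 / v (e i)) else 0) *
          max 0 ((∑ j, w (e i) j * x j) + β (e i))) + 1
        ≤ (∑ i, if i = i₀ then (-2:ℝ) else 0) + 1 := by
          gcongr with i _; exact hterm i
      _ = -2 + 1 := by rw [Finset.sum_ite_eq' Finset.univ i₀ (fun _ => (-2:ℝ))]; simp
      _ < 0 := by norm_num
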